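/- Let $X$ be a compact metric space and $f: X \to X$ a homeomorphism satisfying the shadowing property. If $f^{-1}$ is sensitive with sensitivity constant $\varepsilon > 0$, then for each $x \in X$ there is a nonempty compact perfect set $C_x \subseteq W^s_\varepsilon(x)$. -/

import Mathlib

open Function Metric Filter

variable {X : Type*}

/-- The `ε`-stable set of `x`. -/
def Ws [MetricSpace X] (f : X → X) (ε : ℝ) (x : X) : Set X :=
  {y | ∀ k : ℕ, dist (f^[k] y) (f^[k] x) ≤ ε}
/-- `f` is sensitive with sensitivity constant `ε`. -/
def SensitiveWith [MetricSpace X] (f : X → X) (ε : ℝ) : Prop :=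
  ∀ x : X, ∀ δ : ℝ, 0 < δ → ∃ y : X, dist x y < δ ∧ ∃ n : ℕ, ε < dist (f^[n] x) (f^[n] y)

/-- `f` is sensitive (to initial conditions). -/
def Sensitive [MetricSpace X] (f : X → X) : Prop :=
  ∃ ε : ℝ, 0 < ε ∧ SensitiveWith f ε
/-- The `n`-th iterate (`n ∈ ℤ`) of a homeomorphism `f`. -/
def zIter [TopologicalSpace X] (f : X ≃ₜ X) (n : ℤ) : X → X := fun x => (f.toEquiv ^ n) x

/-- `f` has the shadowing property: every `δ`-pseudo-orbit (indexed by `ℤ`) is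
`ε`-shadowed by a true orbit. -/
def Shadowing [MetricSpace X] (f : X ≃ₜ X) : Prop :=
  ∀ ε : ℝ, 0 < ε → ∃ δ : ℝ, 0 < δ ∧ ∀ x : ℤ → X,
    (∀ n : ℤ, dist (f (x n)) (x (n + 1)) < δ) →
    ∃ y : X, ∀ n : ℤ, dist (zIter f n y) (x n) < ε

section StableAux

/-- The tree of branch points: `nodeF g Q N x w` is the point reached after following
the branching backward pseudo-orbit described by the word `w` (most recent bit first). -/
def nodeF (g Q : X → X) (N : X → ℕ) (x : X) : List Bool → X
  | [] => x
  | (i :: w) =>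
      g^[N (nodeF g Q N x w)] (if i then Q (nodeF g Q N x w) else nodeF g Q N x w)

/-- The length-`k` word (in reverse order) determined by the first `k` bits of `s`. -/
def wrd (s : ℕ → Bool) : ℕ → List Bool
  | 0 => []
  | (k+1) => s k :: wrd s k

/-- The starting point of the `k`-th backward segment. -/
def rptF (g Q : X → X) (N : X → ℕ) (x : X) (s : ℕ → Bool) (k : ℕ) : X :=
  if s k then Q (nodeF g Q N x (wrd s k)) else nodeF g Q N x (wrd s k)

/-- Cumulative backward times. -/
def TF (g Q : X → X) (N : X → ℕ) (x : X) (s : ℕ → Bool) : ℕ → ℕ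
  | 0 => 0
  | (k+1) => TF g Q N x s k + N (nodeF g Q N x (wrd s k))

/-- The index of the segment containing backward time `t`. -/
def kkF (g Q : X → X) (N : X → ℕ) (x : X) (s : ℕ → Bool) (t : ℕ) : ℕ :=
  Nat.find (⟨t, Or.inr le_rfl⟩ : ∃ k, t ≤ TF g Q N x s (k+1) ∨ t ≤ k)

/-- The branching pseudo-orbit associated to `s : ℕ → Bool`. -/
def POF (f g Q : X → X) (N : X → ℕ) (x : X) (s : ℕ → Bool) (m : ℤ) : X :=
  if 0 ≤ m then f^[m.toNat] x
  else g^[(-m).toNat - TF g Q N x s (kkF g Q N x s (-m).toNat)]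
        (rptF g Q N x s (kkF g Q N x s (-m).toNat))

variable [MetricSpace X] (g Q : X → X) (N : X → ℕ) (x : X) (s : ℕ → Bool)

lemma node_wrd_succ (k : ℕ) :
    nodeF g Q N x (wrd s (k+1)) = g^[N (nodeF g Q N x (wrd s k))] (rptF g Q N x s k) := rfl

lemma TF_succ (k : ℕ) :
    TF g Q N x s (k+1) = TF g Q N x s k + N (nodeF g Q N x (wrd s k)) := rfl

lemma TF_strict (hN1 : ∀ p, 1 ≤ N p) : StrictMono (TF g Q N x s) := by
  apply strictMono_nat_of_lt_succ
  intro k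
  have := hN1 (nodeF g Q N x (wrd s k))
  rw [TF_succ]; omega

lemma TF_ge (hN1 : ∀ p, 1 ≤ N p) (k : ℕ) : k ≤ TF g Q N x s k := by
  induction k with
  | zero => simp
  | succ k ih =>
    have := hN1 (nodeF g Q N x (wrd s k))
    rw [TF_succ]; omega

lemma kkF_eq_find (t : ℕ) : kkF g Q N x s t =
    Nat.find (⟨t, Or.inr le_rfl⟩ : ∃ k, t ≤ TF g Q N x s (k+1) ∨ t ≤ k) := rfl

lemma kk_le (hN1 : ∀ p, 1 ≤ N p) (t : ℕ) :
    t ≤ TF g Q N x s (kkF g Q N x s t + 1) := by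
  have h := Nat.find_spec (⟨t, Or.inr le_rfl⟩ : ∃ k, t ≤ TF g Q N x s (k+1) ∨ t ≤ k)
  rw [← kkF_eq_find] at h
  rcases h with h | h
  · exact h
  · exact h.trans ((Nat.le_succ _).trans (TF_ge g Q N x s hN1 _))

lemma kk_lt (hN1 : ∀ p, 1 ≤ N p) {t : ℕ} (ht : 1 ≤ t) :
    TF g Q N x s (kkF g Q N x s t) < t := by
  rcases Nat.eq_zero_or_pos (kkF g Q N x s t) with h | h
  · rw [h]; simp [TF]; omega
  · obtain ⟨j, hj⟩ : ∃ j, kkF g Q N x s t = j + 1 := ⟨kkF g Q N x s t - 1, by omega⟩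
    have hmin : ¬ (t ≤ TF g Q N x s (j+1) ∨ t ≤ j) :=
      Nat.find_min (⟨t, Or.inr le_rfl⟩ : ∃ k, t ≤ TF g Q N x s (k+1) ∨ t ≤ k)
        (by rw [← kkF_eq_find]; omega)
    push_neg at hmin
    rw [hj]
    exact hmin.1

lemma kk_unique (hN1 : ∀ p, 1 ≤ N p) {t k : ℕ}
    (h1 : TF g Q N x s k < t) (h2 : t ≤ TF g Q N x s (k+1)) :
    kkF g Q N x s t = k := by
  have hsm := TF_strict g Q N x s hN1
  have ht : 1 ≤ t := by omega
  have ha := kk_le g Q N x s hN1 t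
  have hb := kk_lt g Q N x s hN1 ht
  by_contra hne
  rcases lt_or_gt_of_ne hne with h | h
  · have : TF g Q N x s (kkF g Q N x s t + 1) ≤ TF g Q N x s k := hsm.monotone (by omega)
    omega
  · have : TF g Q N x s (k+1) ≤ TF g Q N x s (kkF g Q N x s t) := hsm.monotone (by omega)
    omega

lemma PO_natCast (f : X → X) (n : ℕ) : POF f g Q N x s (n : ℤ) = f^[n] x := by
  simp [POF]

lemma PO_neg (f : X → X) {t : ℕ} (ht : 1 ≤ t) :
    POF f g Q N x s (-(t : ℤ)) =
      g^[t - TF g Q N x s (kkF g Q N x s t)] (rptF g Q N x s (kkF g Q N x s t)) := by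
  have h1 : ¬ (0 ≤ -(t : ℤ)) := by omega
  have h2 : (-(-(t : ℤ))).toNat = t := by omega
  unfold POF
  rw [if_neg h1, h2]

lemma rpt_close {δ0 : ℝ} (hδ0 : 0 < δ0) (hQ : ∀ p, dist p (Q p) < δ0) (k : ℕ) :
    dist (rptF g Q N x s k) (nodeF g Q N x (wrd s k)) < δ0 := by
  unfold rptF
  split
  · rw [dist_comm]; exact hQ _
  · simpa using hδ0

lemma PO_pseudo (f : X → X) {δ0 : ℝ} (hδ0 : 0 < δ0) (hfg : ∀ y, f (g y) = y)
    (hQ : ∀ p, dist p (Q p) < δ0) (hN1 : ∀ p, 1 ≤ N p) (m : ℤ) :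
    dist (f (POF f g Q N x s m)) (POF f g Q N x s (m+1)) < δ0 := by
  rcases le_or_gt 0 m with hm | hm
  · obtain ⟨n, rfl⟩ : ∃ n : ℕ, m = (n : ℤ) := ⟨m.toNat, by omega⟩
    have e2 : POF f g Q N x s ((n : ℤ) + 1) = f^[n+1] x := by
      rw [show ((n : ℤ) + 1) = ((n+1 : ℕ) : ℤ) by push_cast; ring, PO_natCast]
    rw [PO_natCast, e2, Function.iterate_succ_apply', dist_self]
    exact hδ0
  · obtain ⟨t, rfl⟩ : ∃ t : ℕ, m = -((t+1 : ℕ) : ℤ) := ⟨(-m).toNat - 1, by omega⟩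
    have hm1 : (-((t+1 : ℕ) : ℤ)) + 1 = -((t : ℕ) : ℤ) := by push_cast; ring
    rw [hm1, PO_neg g Q N x s f (by omega : 1 ≤ t + 1)]
    rcases Nat.eq_zero_or_pos t with rfl | ht
    · have hk0 : kkF g Q N x s 1 = 0 := by
        apply kk_unique g Q N x s hN1
        · simp [TF]
        · exact TF_ge g Q N x s hN1 1
      have e2 : POF f g Q N x s (-((0 : ℕ) : ℤ)) = x := by simp [POF]
      rw [e2]
      norm_num [hk0]
      rw [show TF g Q N x s 0 = 0 from rfl]
      rw [Nat.sub_zero, Function.iterate_one, hfg]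
      exact rpt_close g Q N x s hδ0 hQ 0
    · have hka := kk_le g Q N x s hN1 t
      have hkb := kk_lt g Q N x s hN1 ht
      rw [PO_neg g Q N x s f ht]
      rcases lt_or_eq_of_le hka with hlt | heq
      · have hk1 : kkF g Q N x s (t+1) = kkF g Q N x s t :=
          kk_unique g Q N x s hN1 (by omega) (by omega)
        rw [hk1]
        have hexp : (t+1) - TF g Q N x s (kkF g Q N x s t) =
            (t - TF g Q N x s (kkF g Q N x s t)) + 1 := by omega
        rw [hexp, Function.iterate_succ_apply', hfg, dist_self]
        exact hδ0
      · -- t = TF (k+1)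
        have hk1 : kkF g Q N x s (t+1) = kkF g Q N x s t + 1 := by
          apply kk_unique g Q N x s hN1 (by omega)
          have := hN1 (nodeF g Q N x (wrd s (kkF g Q N x s t + 1)))
          rw [TF_succ g Q N x s (kkF g Q N x s t + 1)]
          omega
        rw [hk1]
        have h1 : (t+1) - TF g Q N x s (kkF g Q N x s t + 1) = 1 := by omega
        have h2 : t - TF g Q N x s (kkF g Q N x s t) =
            N (nodeF g Q N x (wrd s (kkF g Q N x s t))) := by
          rw [TF_succ] at heq
          omega
        rw [h1, h2, Function.iterate_one, hfg, ← node_wrd_succ]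
        exact rpt_close g Q N x s hδ0 hQ (kkF g Q N x s t + 1)

lemma wrd_eq {a b : ℕ → Bool} {k : ℕ} (h : ∀ j, j < k → a j = b j) :
    wrd a k = wrd b k := by
  induction k with
  | zero => rfl
  | succ k ih =>
    simp only [wrd]
    rw [h k (by omega), ih (fun j hj => h j (by omega))]

lemma TF_eq {a b : ℕ → Bool} {k : ℕ} (h : ∀ j, j < k → a j = b j) :
    ∀ j, j ≤ k → TF g Q N x a j = TF g Q N x b j := by
  intro j hj
  induction j with
  | zero => rfl
  | succ j ih =>
    rw [TF_succ, TF_succ, ih (by omega),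
      wrd_eq (fun i hi => h i (by omega))]

lemma PO_sep (f : X → X) {ε : ℝ}
    (hN : ∀ p, ε < dist (g^[N p] p) (g^[N p] (Q p)))
    (hN1 : ∀ p, 1 ≤ N p) {a b : ℕ → Bool} {k : ℕ}
    (hpre : ∀ j, j < k → a j = b j) (hk : a k ≠ b k) :
    ε < dist (POF f g Q N x a (-(TF g Q N x a (k+1) : ℤ)))
             (POF f g Q N x b (-(TF g Q N x a (k+1) : ℤ))) := by
  have hw : wrd a k = wrd b k := wrd_eq hpre
  have hT : TF g Q N x a k = TF g Q N x b k := TF_eq g Q N x hpre k le_rfl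
  have hT1 : TF g Q N x a (k+1) = TF g Q N x b (k+1) := by
    rw [TF_succ, TF_succ, hT, hw]
  have hNn := hN1 (nodeF g Q N x (wrd a k))
  have hτk : TF g Q N x a k < TF g Q N x a (k+1) := by rw [TF_succ]; omega
  have hτ1 : 1 ≤ TF g Q N x a (k+1) := by omega
  have hks : kkF g Q N x a (TF g Q N x a (k+1)) = k :=
    kk_unique g Q N x a hN1 hτk le_rfl
  have hkt : kkF g Q N x b (TF g Q N x a (k+1)) = k :=
    kk_unique g Q N x b hN1 (by omega) (by omega)
  rw [PO_neg g Q N x a f hτ1, PO_neg g Q N x b f hτ1, hks, hkt]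
  have he : TF g Q N x a (k+1) - TF g Q N x a k = N (nodeF g Q N x (wrd a k)) := by
    rw [TF_succ]; omega
  have he' : TF g Q N x a (k+1) - TF g Q N x b k = N (nodeF g Q N x (wrd a k)) := by
    omega
  rw [he, he']
  unfold rptF
  rw [← hw]
  cases hsk : a k <;> cases htk : b k
  · simp [hsk, htk] at hk
  · simpa using hN (nodeF g Q N x (wrd a k))
  · rw [dist_comm]
    simpa using hN (nodeF g Q N x (wrd a k))
  · simp [hsk, htk] at hk

lemma zIter_natCast [MetricSpace X] (f : X ≃ₜ X) (n : ℕ) (y : X) :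
    zIter f (n : ℤ) y = (⇑f)^[n] y := by
  simp only [zIter, zpow_natCast, ← Equiv.Perm.iterate_eq_pow]
  rfl

lemma not_countable_funBool : ¬ Countable (ℕ → Bool) := by
  intro h
  have h1 : Cardinal.mk (ℕ → Bool) ≤ Cardinal.aleph0 := Cardinal.mk_le_aleph0
  rw [Cardinal.mk_arrow] at h1
  simp at h1
  exact absurd h1 (not_le.mpr (Cardinal.cantor _))

end StableAux

/-- If a homeomorphism of a compact metric space has the shadowing property and its
inverse is sensitive with sensitivity constant `ε > 0`, then each local stable set
`W^s_ε(x)` contains a nonempty compact perfect set. -/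
theorem stmt14 [MetricSpace X] [CompactSpace X] (f : X ≃ₜ X) (hsh : Shadowing f)
    (ε : ℝ) (hε : 0 < ε) (hsens : SensitiveWith (f.symm : X → X) ε) :
    ∀ x : X, ∃ C : Set X, C.Nonempty ∧ IsCompact C ∧ Perfect C ∧
      C ⊆ Ws (f : X → X) ε x := by
  intro x
  obtain ⟨δ, hδpos, hshad⟩ := hsh (ε/4) (by positivity)
  set δ0 := min δ (ε/4) with hδ0def
  have hδ0 : 0 < δ0 := lt_min hδpos (by positivity)
  have hδ0δ : δ0 ≤ δ := min_le_left _ _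
  have hδ0ε : δ0 ≤ ε/4 := min_le_right _ _
  set g : X → X := ⇑f.symm with hg
  have hsel : ∀ p : X, ∃ q : X, dist p q < δ0 ∧ ∃ n, ε < dist (g^[n] p) (g^[n] q) :=
    fun p => hsens p δ0 hδ0
  choose Q hQ N hN using hsel
  have hN1 : ∀ p, 1 ≤ N p := by
    intro p
    by_contra h
    have h0 : N p = 0 := by omega
    have := hN p
    rw [h0] at this
    simp at this
    have := hQ p
    linarith
  have hfg : ∀ y, (⇑f) (g y) = y := fun y => f.apply_symm_apply y
  have hsh2 : ∀ s : ℕ → Bool, ∃ y : X, ∀ n : ℤ,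
      dist (zIter f n y) (POF (⇑f) g Q N x s n) < ε/4 := by
    intro s
    apply hshad
    intro n
    exact lt_of_lt_of_le (PO_pseudo g Q N x s (⇑f) hδ0 hfg hQ hN1 n) hδ0δ
  choose Y hY using hsh2
  have hYinj : Function.Injective Y := by
    intro s t hst
    by_contra hne
    have hex : ∃ k, s k ≠ t k := by
      by_contra h
      push_neg at h
      exact hne (funext h)
    set k := Nat.find hex with hkdef
    have hk : s k ≠ t k := Nat.find_spec hex
    have hpre : ∀ j, j < k → s j = t j := by
      intro j hj
      by_contra h
      exact absurd (Nat.find_min hex hj) (by simpa using h)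
    have hsep := PO_sep g Q N x (⇑f) hN hN1 hpre hk
    set m : ℤ := -(TF g Q N x s (k+1) : ℤ) with hm
    have h1 := hY s m
    have h2 := hY t m
    rw [hst] at h1
    have hd := dist_triangle (POF (⇑f) g Q N x s m) (zIter f m (Y t))
      (POF (⇑f) g Q N x t m)
    have h1' : dist (POF (⇑f) g Q N x s m) (zIter f m (Y t)) < ε/4 := by
      rw [dist_comm]; exact h1
    linarith
  have hYmem : ∀ s, Y s ∈ Ws (⇑f) ε x := by
    intro s k
    have h1 := hY s (k : ℤ)
    rw [zIter_natCast, PO_natCast] at h1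
    linarith
  have hWsClosed : IsClosed (Ws (⇑f) ε x) := by
    have : Ws (⇑f) ε x = ⋂ k : ℕ, {y | dist ((⇑f)^[k] y) ((⇑f)^[k] x) ≤ ε} := by
      ext y
      simp [Ws, Set.mem_iInter]
    rw [this]
    exact isClosed_iInter fun k =>
      isClosed_le (Continuous.dist (f.continuous.iterate k) continuous_const) continuous_const
  set S := closure (Set.range Y) with hS
  have hSsub : S ⊆ Ws (⇑f) ε x :=
    closure_minimal (Set.range_subset_iff.mpr hYmem) hWsClosed
  have hSunc : ¬ S.Countable := by
    intro hc
    have h1 : (Set.range Y).Countable := hc.mono subset_closure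
    have h2 : Countable (Set.range Y) := h1.to_subtype
    have h3 : Countable (ℕ → Bool) :=
      Function.Injective.countable (f := fun s => (⟨Y s, Set.mem_range_self s⟩ : Set.range Y))
        (fun a b hab => hYinj (Subtype.mk_eq_mk.mp hab))
    exact not_countable_funBool h3
  obtain ⟨D, hDperf, hDne, hDsub⟩ :=
    exists_perfect_nonempty_of_isClosed_of_not_countable isClosed_closure hSunc
  exact ⟨D, hDne, hDperf.closed.isCompact, hDperf, hDsub.trans hSsub⟩
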